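/- Suppose f is irreducible in ℤ[u^{±1}] and noncyclotomic. Then a bounded integer sequence v ∈ ℓ^∞(ℤ,ℤ) lies in V_f if and only if for every complex root θ of f with |θ| = 1 one has sup_{m,n ≥ 0} |Σ_{k=−m}^{n} v_k θ^k| < ∞. In particular, V_f contains ℓ^1(ℤ,ℤ) (the finitely-supported-sum integrable sequences) and every periodic element of ℓ^∞(ℤ,ℤ). -/

import Mathlib

open Filter Topology Polynomial
open Finset

noncomputable section

/-- `f(σ̄)` on real sequences. -/
def fsR (f : Polynomial ℤ) (w : ℤ → ℝ) : ℤ → ℝ :=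
  fun n => ∑ k ∈ Finset.range (f.natDegree + 1), (f.coeff k : ℝ) * w (n + (k : ℤ))

/-- Bounded real sequences. -/
def Bdd (w : ℤ → ℝ) : Prop := ∃ B : ℝ, ∀ n, |w n| ≤ B

/-- Bounded integer sequences. -/
def BddZ (v : ℤ → ℤ) : Prop := ∃ B : ℤ, ∀ n, |v n| ≤ B

/-- The sequence `v^Δ`. -/
def vDelta : ℤ → ℝ := fun n => if n = 0 then 1 else 0

/-- `f` is noncyclotomic. -/
def Noncyclotomic (f : Polynomial ℤ) : Prop :=
  ∀ θ : ℂ, Polynomial.aeval θ f = 0 → ∀ n : ℕ, 0 < n → θ ^ n ≠ 1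

/-- `w⁺`. -/
def IsWplus (f : Polynomial ℤ) (w : ℤ → ℝ) : Prop :=
  Bdd w ∧ fsR f w = vDelta ∧ Tendsto w atTop (nhds 0)

/-- `w⁻`. -/
def IsWminus (f : Polynomial ℤ) (w : ℤ → ℝ) : Prop :=
  Bdd w ∧ fsR f w = vDelta ∧ Tendsto w atBot (nhds 0)

/-- `ξ̄*(v)_k = ∑_{n≥0} v_n w⁻_{k-n} + ∑_{n<0} v_n w⁺_{k-n}`. -/
def xiStar (wp wm : ℤ → ℝ) (v : ℤ → ℤ) : ℤ → ℝ :=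
  fun k => ∑' n : ℤ, (v n : ℝ) * (if 0 ≤ n then wm (k - n) else wp (k - n))

/-- Membership in `W_f = f(σ̄)^{-1}(ℓ^∞(ℤ,ℤ)) ⊆ ℓ^∞(ℤ,ℝ)`. -/
def InWf (f : Polynomial ℤ) (w : ℤ → ℝ) : Prop :=
  Bdd w ∧ ∀ n, ∃ z : ℤ, fsR f w n = (z : ℝ)

/-- Membership in `V_f = f(σ̄)(W_f)` for an integer sequence. -/
def InVf (f : Polynomial ℤ) (v : ℤ → ℤ) : Prop :=
  ∃ w : ℤ → ℝ, Bdd w ∧ ∀ n, fsR f w n = (v n : ℝ)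

/- ### Integer interval sums -/

lemma Icc_succ_top' {a b : ℤ} (h : a ≤ b + 1) (f : ℤ → ℂ) :
    ∑ k ∈ Icc a (b+1), f k = (∑ k ∈ Icc a b, f k) + f (b+1) := by
  have he : Icc a (b+1) = insert (b+1) (Icc a b) := by
    ext x; simp only [Finset.mem_Icc, Finset.mem_insert]; omega
  rw [he, Finset.sum_insert (by simp only [Finset.mem_Icc]; omega)]
  ring

lemma Icc_insert_bot' {a b : ℤ} (h : a ≤ b) (f : ℤ → ℂ) :
    ∑ k ∈ Icc a b, f k = f a + ∑ k ∈ Icc (a+1) b, f k := by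
  have he : Icc a b = insert a (Icc (a+1) b) := by
    ext x; simp only [Finset.mem_Icc, Finset.mem_insert]; omega
  rw [he, Finset.sum_insert (by simp only [Finset.mem_Icc]; omega)]

/-- partial-sum function with base point 0 -/
def phi (g : ℤ → ℂ) : ℤ → ℂ := fun n =>
  if 0 ≤ n then ∑ k ∈ Icc 0 (n-1), g k else -∑ k ∈ Icc n (-1), g k

lemma phi_succ (g : ℤ → ℂ) (n : ℤ) : phi g (n+1) = phi g n + g n := by
  unfold phi
  rcases le_or_gt 0 n with h | h
  · rw [if_pos (show (0:ℤ) ≤ n + 1 by omega), if_pos h]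
    have := Icc_succ_top' (a := 0) (b := n - 1) (by omega) g
    simpa using this
  · rw [if_neg (show ¬ (0:ℤ) ≤ n by omega)]
    rcases eq_or_lt_of_le (show n + 1 ≤ 0 by omega) with h1 | h1
    · have hn : n = -1 := by omega
      subst hn
      rw [if_pos (show (0:ℤ) ≤ -1 + 1 by omega)]
      simp
    · rw [if_neg (show ¬ (0:ℤ) ≤ n + 1 by omega)]
      have := Icc_insert_bot' (a := n) (b := -1) (by omega) g
      rw [this]; ring

lemma sum_Icc_eq_phi (g : ℤ → ℂ) (a : ℤ) : ∀ b : ℤ, a - 1 ≤ b →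
    ∑ k ∈ Icc a b, g k = phi g (b+1) - phi g a := by
  refine Int.le_induction ?_ ?_
  · rw [Finset.Icc_eq_empty (by omega : ¬ a ≤ a - 1)]
    have : a - 1 + 1 = a := by ring
    rw [this]; simp
  · intro n hn ih
    rw [Icc_succ_top' (by omega) g, ih, phi_succ g (n+1)]
    ring

lemma norm_phi_le {g : ℤ → ℂ} {C : ℝ}
    (h : ∀ a b : ℤ, ‖∑ k ∈ Icc a b, g k‖ ≤ C) (n : ℤ) : ‖phi g n‖ ≤ C := by
  unfold phi
  split
  · exact h 0 (n-1)
  · rw [norm_neg]; exact h n (-1)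

/- ### Geometric sums -/

lemma geom_Icc_mul {lam : ℂ} (h0 : lam ≠ 0) (a : ℤ) : ∀ b : ℤ, a - 1 ≤ b →
    (lam - 1) * ∑ k ∈ Icc a b, lam ^ k = lam ^ (b+1) - lam ^ a := by
  refine Int.le_induction ?_ ?_
  · rw [Finset.Icc_eq_empty (by omega : ¬ a ≤ a - 1)]
    have : a - 1 + 1 = a := by ring
    rw [this]; simp
  · intro n hn ih
    rw [Icc_succ_top' (by omega), mul_add, ih, zpow_add_one₀ h0 (n+1)]
    ring

lemma norm_zpow_one {lam : ℂ} (h : ‖lam‖ = 1) (k : ℤ) : ‖lam ^ k‖ = 1 := by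
  rw [norm_zpow, h, one_zpow]

lemma ne_zero_of_abs_one {lam : ℂ} (h : ‖lam‖ = 1) : lam ≠ 0 := by
  intro h0; rw [h0] at h; simp at h

lemma geom_Icc_bound {lam : ℂ} (h1 : ‖lam‖ = 1) (hne : lam ≠ 1) (a b : ℤ) :
    ‖∑ k ∈ Icc a b, lam ^ k‖ ≤ 2 / ‖lam - 1‖ := by
  have hl : lam - 1 ≠ 0 := sub_ne_zero.mpr hne
  have hlpos : 0 < ‖lam - 1‖ := norm_pos_iff.mpr hl
  rcases le_or_gt (a-1) b with hab | hab
  · have key := geom_Icc_mul (ne_zero_of_abs_one h1) a b hab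
    have hnorm : ‖lam - 1‖ * ‖∑ k ∈ Icc a b, lam ^ k‖ = ‖lam ^ (b+1) - lam ^ a‖ := by
      rw [← norm_mul, key]
    rw [le_div_iff₀ hlpos, mul_comm, hnorm]
    calc ‖lam ^ (b+1) - lam ^ a‖ ≤ ‖lam ^ (b+1)‖ + ‖lam ^ a‖ := norm_sub_le _ _
    _ ≤ 2 := by rw [norm_zpow_one h1, norm_zpow_one h1]; norm_num
  · rw [Finset.Icc_eq_empty (by omega)]
    simp only [Finset.sum_empty, norm_zero]
    positivity

/- ### Predicates -/

def BddC (w : ℤ → ℂ) : Prop := ∃ B : ℝ, 0 ≤ B ∧ ∀ n, ‖w n‖ ≤ B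

/-- uniformly bounded partial sums of `v k * θ^k` -/
def PS (θ : ℂ) (v : ℤ → ℂ) : Prop :=
  ∃ C : ℝ, 0 ≤ C ∧ ∀ a b : ℤ, ‖∑ k ∈ Icc a b, v k * θ ^ k‖ ≤ C

lemma sum_Icc_shift (h : ℤ → ℂ) (a b c : ℤ) :
    ∑ k ∈ Icc a b, h k = ∑ i ∈ Icc (a - c) (b - c), h (i + c) := by
  have he : Icc a b = Finset.map (addRightEmbedding c) (Icc (a-c) (b-c)) := by
    rw [Finset.map_add_right_Icc]; congr 1 <;> omega
  rw [he, Finset.sum_map]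
  rfl

lemma step_circle {θ : ℂ} (hθ1 : ‖θ‖ = 1) {v : ℤ → ℂ}
    (hps : PS θ⁻¹ v) :
    ∃ u : ℤ → ℂ, BddC u ∧ (∀ n, u (n+1) - θ * u n = v n) ∧
      ∀ μ : ℂ, ‖μ‖ = 1 → μ ≠ θ → PS μ⁻¹ v → PS μ⁻¹ u := by
  have hθ0 : θ ≠ 0 := ne_zero_of_abs_one hθ1
  obtain ⟨Cθ, hCθ0, hCθ⟩ := hps
  set g : ℤ → ℂ := fun k => v k * θ⁻¹ ^ k with hg
  refine ⟨fun n => θ ^ (n-1) * phi g n, ?_, ?_, ?_⟩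
  · refine ⟨Cθ, hCθ0, fun n => ?_⟩
    rw [norm_mul, norm_zpow_one hθ1, one_mul]
    exact norm_phi_le hCθ n
  · intro n
    simp only
    have h1 : (n + 1 : ℤ) - 1 = n := by ring
    have h2 : θ * θ ^ (n - 1) = θ ^ n := by
      rw [mul_comm, ← zpow_add_one₀ hθ0]; norm_num
    rw [h1, ← mul_assoc, h2, phi_succ, mul_add, add_sub_cancel_left]
    rw [hg]
    simp only
    rw [inv_zpow]
    rw [mul_comm (v n), ← mul_assoc, mul_inv_cancel₀ (zpow_ne_zero n hθ0), one_mul]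
  · rintro μ hμ1 hμθ ⟨Cμ, hCμ0, hCμ⟩
    have hμ0 : μ ≠ 0 := ne_zero_of_abs_one hμ1
    set lam : ℂ := θ * μ⁻¹ with hlam
    have hlam1 : ‖lam‖ = 1 := by
      rw [hlam, norm_mul, norm_inv, hμ1, hθ1]; norm_num
    have hlam0 : lam ≠ 0 := ne_zero_of_abs_one hlam1
    have hlamne : lam ≠ 1 := by
      intro h; apply hμθ
      rw [hlam] at h; field_simp at h; exact h.symm
    have hθinv : θ⁻¹ * lam = μ⁻¹ := by rw [hlam]; field_simp
    set Dl := ‖lam - 1‖ with hDl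
    have hDlpos : 0 < Dl := norm_pos_iff.mpr (sub_ne_zero.mpr hlamne)
    refine ⟨Cθ * (2 / Dl) + (Cθ + Cμ) / Dl, by positivity, fun a b => ?_⟩
    rcases lt_or_ge b a with hab | hab
    · rw [Finset.Icc_eq_empty (by omega)]
      simp only [Finset.sum_empty, norm_zero]
      positivity
    -- assemble the sum
    have eqA : ∑ k ∈ Icc a b, (fun n => θ ^ (n-1) * phi g n) k * μ⁻¹ ^ k
        = θ⁻¹ * ∑ k ∈ Icc a b, phi g k * lam ^ k := by
      rw [Finset.mul_sum]
      apply Finset.sum_congr rfl; intro k _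
      simp only
      rw [zpow_sub_one₀ hθ0, hlam, mul_zpow]
      ring
    have eqB : ∀ k ∈ Icc a b, phi g k * lam ^ k
        = phi g a * lam ^ k + ∑ j ∈ Icc a (k-1), g j * lam ^ k := by
      intro k hk
      rw [Finset.mem_Icc] at hk
      have ht : ∑ j ∈ Icc a (k-1), g j = phi g k - phi g a := by
        have h2 := sum_Icc_eq_phi g a (k-1) (by omega)
        rwa [sub_add_cancel] at h2
      rw [← Finset.sum_mul, ht]; ring
    have eqC : ∑ k ∈ Icc a b, phi g k * lam ^ k
        = phi g a * (∑ k ∈ Icc a b, lam ^ k)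
          + ∑ j ∈ Icc a (b-1), ∑ k ∈ Icc (j+1) b, g j * lam ^ k := by
      rw [Finset.sum_congr rfl eqB, Finset.sum_add_distrib, Finset.mul_sum]
      congr 1
      exact Finset.sum_comm' (fun k j => by simp only [Finset.mem_Icc]; omega)
    have eqD : ∀ j ∈ Icc a (b-1), ∑ k ∈ Icc (j+1) b, g j * lam ^ k
        = (lam - 1)⁻¹ * (lam ^ (b+1) * g j - lam * (v j * μ⁻¹ ^ j)) := by
      intro j hj
      rw [Finset.mem_Icc] at hj
      rw [← Finset.mul_sum]
      have hge := geom_Icc_mul hlam0 (j+1) b (by omega)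
      have hin : ∑ k ∈ Icc (j+1) b, lam ^ k = (lam - 1)⁻¹ * (lam ^ (b+1) - lam ^ (j+1)) := by
        rw [eq_inv_mul_iff_mul_eq₀ (sub_ne_zero.mpr hlamne)]
        linear_combination hge
      have hgj : g j * lam ^ j = v j * μ⁻¹ ^ j := by
        rw [hg]; simp only
        rw [mul_assoc, ← mul_zpow, hθinv]
      rw [hin, zpow_add_one₀ hlam0 j]
      calc g j * ((lam-1)⁻¹ * (lam^(b+1) - lam^j * lam))
          = (lam-1)⁻¹ * (lam^(b+1) * g j - lam * (g j * lam^j)) := by ring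
        _ = _ := by rw [hgj]
    have eqE : ∑ j ∈ Icc a (b-1), (lam - 1)⁻¹ * (lam ^ (b+1) * g j - lam * (v j * μ⁻¹ ^ j))
        = (lam - 1)⁻¹ * (lam ^ (b+1) * (∑ j ∈ Icc a (b-1), g j)
            - lam * (∑ j ∈ Icc a (b-1), v j * μ⁻¹ ^ j)) := by
      rw [← Finset.mul_sum]
      congr 1
      rw [Finset.sum_sub_distrib, ← Finset.mul_sum, ← Finset.mul_sum]
    rw [eqA, eqC, Finset.sum_congr rfl eqD, eqE]
    have hθn : ‖θ‖ = 1 := by rw [hθ1]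
    rw [norm_mul, norm_inv, hθn, inv_one, one_mul]
    calc ‖phi g a * (∑ k ∈ Icc a b, lam ^ k)
          + (lam - 1)⁻¹ * (lam ^ (b+1) * (∑ j ∈ Icc a (b-1), g j)
            - lam * (∑ j ∈ Icc a (b-1), v j * μ⁻¹ ^ j))‖
        ≤ ‖phi g a‖ * ‖∑ k ∈ Icc a b, lam ^ k‖
          + ‖lam - 1‖⁻¹ * (‖lam ^ (b+1)‖ * ‖∑ j ∈ Icc a (b-1), g j‖
            + ‖lam‖ * ‖∑ j ∈ Icc a (b-1), v j * μ⁻¹ ^ j‖) := by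
          refine (norm_add_le _ _).trans (add_le_add ?_ ?_)
          · exact le_of_eq (norm_mul _ _)
          · rw [norm_mul, norm_inv]
            refine mul_le_mul_of_nonneg_left ?_ (inv_nonneg.mpr (norm_nonneg _))
            refine (norm_sub_le _ _).trans ?_
            rw [norm_mul, norm_mul]
      _ ≤ Cθ * (2 / Dl) + (Cθ + Cμ) / Dl := by
          rw [norm_zpow_one hlam1]
          have hlamnorm : ‖lam‖ = 1 := by rw [hlam1]
          rw [hlamnorm, one_mul, one_mul]
          have h1 : ‖phi g a‖ ≤ Cθ := norm_phi_le hCθ a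
          have h2 : ‖∑ k ∈ Icc a b, lam ^ k‖ ≤ 2 / Dl := geom_Icc_bound hlam1 hlamne a b
          have h3 : ‖∑ j ∈ Icc a (b-1), g j‖ ≤ Cθ := hCθ a (b-1)
          have h4 : ‖∑ j ∈ Icc a (b-1), v j * μ⁻¹ ^ j‖ ≤ Cμ := hCμ a (b-1)
          have step1 : ‖phi g a‖ * ‖∑ k ∈ Icc a b, lam ^ k‖ ≤ Cθ * (2 / Dl) :=
            mul_le_mul h1 h2 (norm_nonneg _) hCθ0
          have step2 : ‖lam - 1‖⁻¹ * (‖∑ j ∈ Icc a (b-1), g j‖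
              + ‖∑ j ∈ Icc a (b-1), v j * μ⁻¹ ^ j‖) ≤ Dl⁻¹ * (Cθ + Cμ) :=
            mul_le_mul_of_nonneg_left (add_le_add h3 h4) (inv_nonneg.mpr (norm_nonneg _))
          have hdiv : (Cθ + Cμ) / Dl = Dl⁻¹ * (Cθ + Cμ) := by rw [div_eq_inv_mul]
          rw [hdiv]
          exact add_le_add step1 step2

lemma step_small {θ : ℂ} (hθ : ‖θ‖ < 1) {v : ℤ → ℂ} {B : ℝ} (hB0 : 0 ≤ B)
    (hB : ∀ n, ‖v n‖ ≤ B) :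
    ∃ u : ℤ → ℂ, BddC u ∧ (∀ n, u (n+1) - θ * u n = v n) ∧
      ∀ μ : ℂ, ‖μ‖ = 1 → PS μ⁻¹ v → PS μ⁻¹ u := by
  set r : ℝ := ‖θ‖ with hr
  have hr0 : 0 ≤ r := norm_nonneg θ
  have h1r : (0:ℝ) < (1 - r)⁻¹ := inv_pos.mpr (by linarith)
  have hnormθ : ∀ j : ℕ, ‖θ ^ j‖ = r ^ j := fun j => by
    rw [norm_pow]
  have hgeo : Summable fun j : ℕ => r ^ j := summable_geometric_of_lt_one hr0 hθ
  have hbd : ∀ (m : ℤ) (j : ℕ), ‖θ ^ j * v (m - 1 - j)‖ ≤ B * r ^ j := by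
    intro m j
    rw [norm_mul, hnormθ]
    calc r ^ j * ‖v (m - 1 - j)‖ ≤ r ^ j * B :=
          mul_le_mul_of_nonneg_left (hB _) (pow_nonneg hr0 j)
      _ = B * r ^ j := by ring
  have hsum : ∀ n : ℤ, Summable fun j : ℕ => θ ^ j * v (n - 1 - j) :=
    fun n => Summable.of_norm_bounded (hgeo.mul_left B) (hbd n)
  have hsumn : ∀ n : ℤ, Summable fun j : ℕ => ‖θ ^ j * v (n - 1 - j)‖ :=
    fun n => Summable.of_nonneg_of_le (fun j => norm_nonneg _) (hbd n) (hgeo.mul_left B)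
  set u : ℤ → ℂ := fun n => ∑' j : ℕ, θ ^ j * v (n - 1 - j) with hu
  have hrec : ∀ n, u (n+1) - θ * u n = v n := by
    intro n
    have h1 : u (n+1) = ∑' j : ℕ, θ ^ j * v (n - j) := by
      refine tsum_congr (fun j => ?_)
      rw [show n + 1 - 1 - (j:ℤ) = n - j by omega]
    have h2s : Summable fun j : ℕ => θ ^ j * v (n - j) := by
      have := hsum (n+1)
      refine this.congr (fun j => ?_)
      rw [show n + 1 - 1 - (j:ℤ) = n - j by omega]
    have h2 : (∑' j : ℕ, θ ^ j * v (n - j))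
        = θ ^ 0 * v (n - (0:ℕ)) + ∑' j : ℕ, θ ^ (j+1) * v (n - (j+1:ℕ)) :=
      Summable.tsum_eq_zero_add h2s
    have h3 : (∑' j : ℕ, θ ^ (j+1) * v (n - (j+1:ℕ))) = θ * u n := by
      rw [hu, ← tsum_mul_left]
      refine tsum_congr (fun j => ?_)
      rw [pow_succ, show n - ((j:ℕ)+1:ℕ) = n - 1 - j by push_cast; omega]
      ring
    rw [h1, h2, h3]
    simp
  refine ⟨u, ⟨B * (1-r)⁻¹, by positivity, fun n => ?_⟩, hrec, ?_⟩
  · calc ‖u n‖ ≤ ∑' j : ℕ, ‖θ ^ j * v (n - 1 - j)‖ := norm_tsum_le_tsum_norm (hsumn n)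
      _ ≤ ∑' j : ℕ, B * r ^ j := Summable.tsum_le_tsum (hbd n) (hsumn n) (hgeo.mul_left B)
      _ = B * (1-r)⁻¹ := by rw [tsum_mul_left, tsum_geometric_of_lt_one hr0 hθ]
  · rintro μ hμ1 ⟨Cμ, hCμ0, hCμ⟩
    refine ⟨Cμ * (1-r)⁻¹, by positivity, fun a b => ?_⟩
    have hinner : ∀ j : ℕ, ∑ k ∈ Icc a b, (θ ^ j * v (k - 1 - j)) * μ⁻¹ ^ k
        = θ ^ j * (μ⁻¹ ^ ((1:ℤ) + j) * ∑ i ∈ Icc (a - (1+j)) (b - (1+j)), v i * μ⁻¹ ^ i) := by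
      intro j
      rw [sum_Icc_shift (fun k => (θ ^ j * v (k - 1 - j)) * μ⁻¹ ^ k) a b (1+j),
        Finset.mul_sum, Finset.mul_sum]
      refine Finset.sum_congr rfl (fun i _ => ?_)
      rw [show i + (1 + (j:ℤ)) - 1 - j = i by omega, zpow_add₀ (inv_ne_zero (ne_zero_of_abs_one hμ1))]
      ring
    have hbdin : ∀ j : ℕ, ‖θ ^ j * (μ⁻¹ ^ ((1:ℤ) + j) * ∑ i ∈ Icc (a - (1+j)) (b - (1+j)), v i * μ⁻¹ ^ i)‖
        ≤ Cμ * r ^ j := by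
      intro j
      rw [norm_mul, norm_mul, hnormθ, norm_zpow_one (by rw [norm_inv, hμ1]; norm_num), one_mul]
      calc r ^ j * ‖∑ i ∈ Icc (a - (1+j)) (b - (1+j)), v i * μ⁻¹ ^ i‖ ≤ r ^ j * Cμ :=
            mul_le_mul_of_nonneg_left (hCμ _ _) (pow_nonneg hr0 j)
        _ = Cμ * r ^ j := by ring
    have hsumin : Summable fun j : ℕ =>
        θ ^ j * (μ⁻¹ ^ ((1:ℤ) + j) * ∑ i ∈ Icc (a - (1+j)) (b - (1+j)), v i * μ⁻¹ ^ i) :=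
      Summable.of_norm_bounded (hgeo.mul_left Cμ) hbdin
    have hswap : ∑ k ∈ Icc a b, u k * μ⁻¹ ^ k
        = ∑' j : ℕ, ∑ k ∈ Icc a b, (θ ^ j * v (k - 1 - j)) * μ⁻¹ ^ k := by
      have h1 : ∑ k ∈ Icc a b, u k * μ⁻¹ ^ k
          = ∑ k ∈ Icc a b, ∑' j : ℕ, (θ ^ j * v (k - 1 - j)) * μ⁻¹ ^ k := by
        refine Finset.sum_congr rfl (fun k _ => ?_)
        rw [hu, ← tsum_mul_right]
      rw [h1, ← Summable.tsum_finsetSum (fun k _ => (hsum k).mul_right _)]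
    rw [hswap]
    calc ‖∑' j : ℕ, ∑ k ∈ Icc a b, (θ ^ j * v (k - 1 - j)) * μ⁻¹ ^ k‖
        = ‖∑' j : ℕ, θ ^ j * (μ⁻¹ ^ ((1:ℤ) + j) * ∑ i ∈ Icc (a - (1+j)) (b - (1+j)), v i * μ⁻¹ ^ i)‖ := by
          rw [tsum_congr hinner]
      _ ≤ ∑' j : ℕ, ‖θ ^ j * (μ⁻¹ ^ ((1:ℤ) + j) * ∑ i ∈ Icc (a - (1+j)) (b - (1+j)), v i * μ⁻¹ ^ i)‖ :=
          norm_tsum_le_tsum_norm (Summable.of_nonneg_of_le (fun j => norm_nonneg _) hbdin (hgeo.mul_left Cμ))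
      _ ≤ ∑' j : ℕ, Cμ * r ^ j := Summable.tsum_le_tsum hbdin
          (Summable.of_nonneg_of_le (fun j => norm_nonneg _) hbdin (hgeo.mul_left Cμ))
          (hgeo.mul_left Cμ)
      _ = Cμ * (1-r)⁻¹ := by rw [tsum_mul_left, tsum_geometric_of_lt_one hr0 hθ]

lemma step_large {θ : ℂ} (hθ : 1 < ‖θ‖) {v : ℤ → ℂ} {B : ℝ} (hB0 : 0 ≤ B)
    (hB : ∀ n, ‖v n‖ ≤ B) :
    ∃ u : ℤ → ℂ, BddC u ∧ (∀ n, u (n+1) - θ * u n = v n) ∧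
      ∀ μ : ℂ, ‖μ‖ = 1 → PS μ⁻¹ v → PS μ⁻¹ u := by
  have hθ0 : θ ≠ 0 := by
    intro h; rw [h] at hθ; simp at hθ; linarith
  set r : ℝ := ‖θ‖⁻¹ with hr
  have hr0 : 0 ≤ r := inv_nonneg.mpr (norm_nonneg θ)
  have hrlt : r < 1 := by
    rw [hr, inv_lt_one_iff₀]; right; exact hθ
  have h1r : (0:ℝ) < (1 - r)⁻¹ := inv_pos.mpr (by linarith)
  have hnormθ : ∀ j : ℕ, ‖θ⁻¹ ^ j‖ = r ^ j := fun j => by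
    rw [norm_pow, norm_inv]
  have hgeo : Summable fun j : ℕ => r ^ j := summable_geometric_of_lt_one hr0 hrlt
  have hbd : ∀ (m : ℤ) (j : ℕ), ‖θ⁻¹ ^ (j+1) * v (m + j)‖ ≤ (B * r) * r ^ j := by
    intro m j
    rw [norm_mul, hnormθ, pow_succ]
    calc r ^ j * r * ‖v (m + j)‖ ≤ r ^ j * r * B := by
          refine mul_le_mul_of_nonneg_left (hB _) (by positivity)
      _ = (B * r) * r ^ j := by ring
  have hsum : ∀ n : ℤ, Summable fun j : ℕ => θ⁻¹ ^ (j+1) * v (n + j) :=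
    fun n => Summable.of_norm_bounded (hgeo.mul_left (B*r)) (hbd n)
  have hsumn : ∀ n : ℤ, Summable fun j : ℕ => ‖θ⁻¹ ^ (j+1) * v (n + j)‖ :=
    fun n => Summable.of_nonneg_of_le (fun j => norm_nonneg _) (hbd n) (hgeo.mul_left (B*r))
  set u : ℤ → ℂ := fun n => -∑' j : ℕ, θ⁻¹ ^ (j+1) * v (n + j) with hu
  have hrec : ∀ n, u (n+1) - θ * u n = v n := by
    intro n
    have hθu : θ * ∑' j : ℕ, θ⁻¹ ^ (j+1) * v (n + j) = ∑' j : ℕ, θ⁻¹ ^ j * v (n + j) := by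
      rw [← tsum_mul_left]
      refine tsum_congr (fun j => ?_)
      rw [pow_succ]
      field_simp
    have hs2 : Summable fun j : ℕ => θ⁻¹ ^ j * v (n + j) := by
      refine Summable.of_norm_bounded (hgeo.mul_left B) (fun j => ?_)
      rw [norm_mul, hnormθ]
      calc r ^ j * ‖v (n + j)‖ ≤ r ^ j * B :=
            mul_le_mul_of_nonneg_left (hB _) (pow_nonneg hr0 j)
        _ = B * r ^ j := by ring
    have hsplit : (∑' j : ℕ, θ⁻¹ ^ j * v (n + j))
        = θ⁻¹ ^ 0 * v (n + (0:ℕ)) + ∑' j : ℕ, θ⁻¹ ^ (j+1) * v (n + (j+1:ℕ)) :=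
      Summable.tsum_eq_zero_add hs2
    have hshift : (∑' j : ℕ, θ⁻¹ ^ (j+1) * v (n + (j+1:ℕ)))
        = ∑' j : ℕ, θ⁻¹ ^ (j+1) * v ((n+1) + j) := by
      refine tsum_congr (fun j => ?_)
      rw [show n + ((j:ℕ)+1:ℕ) = (n+1) + j by push_cast; omega]
    have hkey : θ * (∑' j : ℕ, θ⁻¹ ^ (j+1) * v (n + j))
        = v n + ∑' j : ℕ, θ⁻¹ ^ (j+1) * v ((n+1) + j) := by
      rw [hθu, hsplit, hshift]
      simp only [pow_zero, Nat.cast_zero, add_zero, one_mul]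
    rw [hu]
    simp only
    rw [mul_neg, hkey]
    ring
  refine ⟨u, ⟨(B*r) * (1-r)⁻¹, by positivity, fun n => ?_⟩, hrec, ?_⟩
  · rw [hu]
    simp only [norm_neg]
    calc ‖∑' j : ℕ, θ⁻¹ ^ (j+1) * v (n + j)‖ ≤ ∑' j : ℕ, ‖θ⁻¹ ^ (j+1) * v (n + j)‖ :=
          norm_tsum_le_tsum_norm (hsumn n)
      _ ≤ ∑' j : ℕ, (B*r) * r ^ j := Summable.tsum_le_tsum (hbd n) (hsumn n) (hgeo.mul_left (B*r))
      _ = (B*r) * (1-r)⁻¹ := by rw [tsum_mul_left, tsum_geometric_of_lt_one hr0 hrlt]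
  · rintro μ hμ1 ⟨Cμ, hCμ0, hCμ⟩
    have hμinv1 : ‖μ⁻¹‖ = 1 := by rw [norm_inv, hμ1]; norm_num
    refine ⟨(Cμ*r) * (1-r)⁻¹, by positivity, fun a b => ?_⟩
    have hinner : ∀ j : ℕ, ∑ k ∈ Icc a b, (θ⁻¹ ^ (j+1) * v (k + j)) * μ⁻¹ ^ k
        = θ⁻¹ ^ (j+1) * (μ⁻¹ ^ (-(j:ℤ)) * ∑ i ∈ Icc (a + j) (b + j), v i * μ⁻¹ ^ i) := by
      intro j
      rw [sum_Icc_shift (fun k => (θ⁻¹ ^ (j+1) * v (k + j)) * μ⁻¹ ^ k) a b (-(j:ℤ)),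
        Finset.mul_sum, Finset.mul_sum]
      rw [show a - -(j:ℤ) = a + j by omega, show b - -(j:ℤ) = b + j by omega]
      refine Finset.sum_congr rfl (fun i _ => ?_)
      rw [show i + -(j:ℤ) + j = i by omega,
        zpow_add₀ (inv_ne_zero (ne_zero_of_abs_one hμ1)) i (-(j:ℤ))]
      ring
    have hbdin : ∀ j : ℕ, ‖θ⁻¹ ^ (j+1) * (μ⁻¹ ^ (-(j:ℤ)) * ∑ i ∈ Icc (a + j) (b + j), v i * μ⁻¹ ^ i)‖
        ≤ (Cμ * r) * r ^ j := by
      intro j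
      rw [norm_mul, norm_mul, hnormθ, norm_zpow_one hμinv1, one_mul, pow_succ]
      calc r ^ j * r * ‖∑ i ∈ Icc (a + j) (b + j), v i * μ⁻¹ ^ i‖ ≤ r ^ j * r * Cμ := by
            refine mul_le_mul_of_nonneg_left (hCμ _ _) (by positivity)
        _ = (Cμ * r) * r ^ j := by ring
    have hswap : ∑ k ∈ Icc a b, u k * μ⁻¹ ^ k
        = -∑' j : ℕ, ∑ k ∈ Icc a b, (θ⁻¹ ^ (j+1) * v (k + j)) * μ⁻¹ ^ k := by
      have h1 : ∑ k ∈ Icc a b, u k * μ⁻¹ ^ k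
          = ∑ k ∈ Icc a b, -∑' j : ℕ, (θ⁻¹ ^ (j+1) * v (k + j)) * μ⁻¹ ^ k := by
        refine Finset.sum_congr rfl (fun k _ => ?_)
        rw [hu]
        simp only
        rw [tsum_mul_right, neg_mul]
      rw [h1, Finset.sum_neg_distrib, ← Summable.tsum_finsetSum (fun k _ => (hsum k).mul_right _)]
    rw [hswap, norm_neg]
    calc ‖∑' j : ℕ, ∑ k ∈ Icc a b, (θ⁻¹ ^ (j+1) * v (k + j)) * μ⁻¹ ^ k‖
        = ‖∑' j : ℕ, θ⁻¹ ^ (j+1) * (μ⁻¹ ^ (-(j:ℤ)) * ∑ i ∈ Icc (a + j) (b + j), v i * μ⁻¹ ^ i)‖ := by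
          rw [tsum_congr hinner]
      _ ≤ ∑' j : ℕ, ‖θ⁻¹ ^ (j+1) * (μ⁻¹ ^ (-(j:ℤ)) * ∑ i ∈ Icc (a + j) (b + j), v i * μ⁻¹ ^ i)‖ :=
          norm_tsum_le_tsum_norm (Summable.of_nonneg_of_le (fun j => norm_nonneg _) hbdin
            (hgeo.mul_left (Cμ*r)))
      _ ≤ ∑' j : ℕ, (Cμ*r) * r ^ j := Summable.tsum_le_tsum hbdin
          (Summable.of_nonneg_of_le (fun j => norm_nonneg _) hbdin (hgeo.mul_left (Cμ*r)))
          (hgeo.mul_left (Cμ*r))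
      _ = (Cμ*r) * (1-r)⁻¹ := by rw [tsum_mul_left, tsum_geometric_of_lt_one hr0 hrlt]


lemma step (θ : ℂ) (v : ℤ → ℂ) (hb : BddC v) (hθps : ‖θ‖ = 1 → PS θ⁻¹ v) :
    ∃ u : ℤ → ℂ, BddC u ∧ (∀ n, u (n+1) - θ * u n = v n) ∧
      ∀ μ : ℂ, ‖μ‖ = 1 → μ ≠ θ → PS μ⁻¹ v → PS μ⁻¹ u := by
  obtain ⟨B, hB0, hBv⟩ := hb
  rcases lt_trichotomy (‖θ‖) 1 with h | h | h
  · obtain ⟨u, hu1, hu2, hu3⟩ := step_small h hB0 hBv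
    exact ⟨u, hu1, hu2, fun μ h1 _ h3 => hu3 μ h1 h3⟩
  · obtain ⟨u, hu1, hu2, hu3⟩ := step_circle h (hθps h)
    exact ⟨u, hu1, hu2, hu3⟩
  · obtain ⟨u, hu1, hu2, hu3⟩ := step_large h hB0 hBv
    exact ⟨u, hu1, hu2, fun μ h1 _ h3 => hu3 μ h1 h3⟩

/-- the shift operator -/
def sigC : Module.End ℂ (ℤ → ℂ) where
  toFun w := fun n => w (n+1)
  map_add' _ _ := rfl
  map_smul' _ _ := rfl

lemma sigC_pow_apply (k : ℕ) (w : ℤ → ℂ) (n : ℤ) : (sigC ^ k) w n = w (n + k) := by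
  induction k generalizing w n with
  | zero => simp
  | succ m ih =>
      rw [pow_succ, Module.End.mul_apply, ih]
      show w (n + m + 1) = w (n + (m+1:ℕ))
      congr 1; push_cast; ring

lemma aeval_sigC_apply (P : ℂ[X]) (w : ℤ → ℂ) (n : ℤ) :
    (Polynomial.aeval sigC P) w n = ∑ j ∈ range (P.natDegree+1), P.coeff j * w (n + j) := by
  rw [Polynomial.aeval_eq_sum_range]
  have h1 : ((∑ i ∈ range (P.natDegree+1), P.coeff i • sigC ^ i) w) n
      = ∑ i ∈ range (P.natDegree+1), (P.coeff i • sigC ^ i) w n := by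
    rw [LinearMap.sum_apply]
    simp [Finset.sum_apply]
  rw [h1]
  refine Finset.sum_congr rfl (fun j _ => ?_)
  rw [LinearMap.smul_apply]
  show (P.coeff j • ((sigC ^ j) w)) n = _
  rw [Pi.smul_apply, smul_eq_mul, sigC_pow_apply]

lemma factor_apply (θ : ℂ) (w : ℤ → ℂ) (n : ℤ) :
    (Polynomial.aeval sigC (X - C θ)) w n = w (n+1) - θ * w n := by
  rw [map_sub, Polynomial.aeval_X, Polynomial.aeval_C]
  rw [LinearMap.sub_apply]
  show (sigC w - (algebraMap ℂ (Module.End ℂ (ℤ → ℂ)) θ) w) n = _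
  rw [Pi.sub_apply, Module.algebraMap_end_apply]
  rfl

lemma solve (l : List ℂ) (hnd : l.Nodup) (v : ℤ → ℂ) (hb : BddC v)
    (hps : ∀ θ ∈ l, ‖θ‖ = 1 → PS θ⁻¹ v) :
    ∃ w : ℤ → ℂ, BddC w ∧ ((l.map (fun θ => Polynomial.aeval sigC (X - C θ))).prod) w = v := by
  induction l generalizing v with
  | nil =>
      exact ⟨v, hb, rfl⟩
  | cons θ t ih =>
      obtain ⟨u, hub, hurec, hupres⟩ := step θ v hb
        (fun hθ1 => hps θ (List.mem_cons_self) hθ1)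
      have hndt : t.Nodup := (List.nodup_cons.mp hnd).2
      have hθnt : θ ∉ t := (List.nodup_cons.mp hnd).1
      obtain ⟨w, hwb, hweq⟩ := ih hndt u hub (fun μ hμt hμ1 => by
        refine hupres μ hμ1 (fun h => hθnt (h ▸ hμt)) ?_
        exact hps μ (List.mem_cons_of_mem θ hμt) hμ1)
      refine ⟨w, hwb, ?_⟩
      rw [List.map_cons, List.prod_cons, Module.End.mul_apply, hweq]
      funext n
      rw [factor_apply, hurec]

lemma unit_of_mul_X_pow : ∀ (m : ℕ) (g h : Polynomial ℤ), g * h = X ^ m → g.coeff 0 ≠ 0 → IsUnit g := by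
  intro m
  induction m with
  | zero =>
      intro g h hgh _
      exact IsUnit.of_mul_eq_one h (by simpa using hgh)
  | succ m ih =>
      intro g h hgh hg0
      have hc : g.coeff 0 * h.coeff 0 = 0 := by
        have := congrArg (fun p => Polynomial.coeff p 0) hgh
        simpa [Polynomial.mul_coeff_zero, Polynomial.coeff_X_pow] using this
      have hh0 : h.coeff 0 = 0 := by
        rcases mul_eq_zero.mp hc with h1 | h1
        · exact absurd h1 hg0
        · exact h1
      obtain ⟨h', rfl⟩ := Polynomial.X_dvd_iff.mpr hh0
      have hcan : g * h' = X ^ m := by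
        have hX : (X : Polynomial ℤ) ≠ 0 := Polynomial.X_ne_zero
        apply mul_left_cancel₀ hX
        rw [← pow_succ', ← hgh]; ring
      exact ih g h' hcan hg0

lemma f_irreducible (f : Polynomial ℤ) (hm : 1 ≤ f.natDegree) (h0 : f.coeff 0 ≠ 0)
    (hirr : Irreducible (Polynomial.toLaurent f)) : Irreducible f := by
  constructor
  · intro hu
    have := Polynomial.natDegree_eq_zero_of_isUnit hu
    omega
  · intro g h hf
    have hlau : Polynomial.toLaurent f = Polynomial.toLaurent g * Polynomial.toLaurent h := by
      rw [hf, map_mul]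
    have key : ∀ g h : Polynomial ℤ, f = g * h → IsUnit (Polynomial.toLaurent g) → IsUnit g := by
      intro g h hf hu
      have hg0 : g.coeff 0 ≠ 0 := by
        intro hc
        apply h0
        rw [hf, Polynomial.mul_coeff_zero, hc, zero_mul]
      obtain ⟨zu, hzu⟩ := hu
      obtain ⟨n, h', hh'⟩ := LaurentPolynomial.exists_T_pow ((zu⁻¹ : (LaurentPolynomial ℤ)ˣ) : LaurentPolynomial ℤ)
      have : Polynomial.toLaurent (g * h') = Polynomial.toLaurent (X ^ n) := by
        rw [map_mul, hh', Polynomial.toLaurent_X_pow, ← hzu, ← mul_assoc]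
        simp
      exact unit_of_mul_X_pow n g h' (Polynomial.toLaurent_injective this) hg0
    rcases hirr.isUnit_or_isUnit hlau with hu | hu
    · exact Or.inl (key g h hf hu)
    · exact Or.inr (key h g (by rw [hf]; ring) hu)

lemma f_roots_nodup (f : Polynomial ℤ) (hm : 1 ≤ f.natDegree) (h0 : f.coeff 0 ≠ 0)
    (hirr : Irreducible (Polynomial.toLaurent f)) :
    (f.map (Int.castRingHom ℂ)).roots.Nodup := by
  have hfi : Irreducible f := f_irreducible f hm h0 hirr
  have hprim : f.IsPrimitive := by
    intro r hdvd
    obtain ⟨q, hq⟩ := hdvd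
    rcases hfi.isUnit_or_isUnit hq with hu | hu
    · exact Polynomial.isUnit_C.mp hu
    · exfalso
      have hr0 : r ≠ 0 := by
        intro hr; rw [hr] at hq; simp at hq
        rw [hq] at h0; simp at h0
      have : f.natDegree = q.natDegree := by
        rw [hq, Polynomial.natDegree_C_mul (by exact_mod_cast hr0)]
      have := Polynomial.natDegree_eq_zero_of_isUnit hu
      omega
  have hQ : Irreducible (f.map (Int.castRingHom ℚ)) :=
    (Polynomial.IsPrimitive.Int.irreducible_iff_irreducible_map_cast hprim).mp hfi
  have hsep : (f.map (Int.castRingHom ℚ)).Separable := hQ.separable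
  have hsepC : ((f.map (Int.castRingHom ℚ)).map (algebraMap ℚ ℂ)).Separable := hsep.map
  have heq : (f.map (Int.castRingHom ℚ)).map (algebraMap ℚ ℂ) = f.map (Int.castRingHom ℂ) := by
    rw [Polynomial.map_map]
    congr 1
  rw [heq] at hsepC
  exact Polynomial.nodup_roots hsepC

lemma conj_root (f : Polynomial ℤ) {θ : ℂ} (hroot : Polynomial.aeval θ f = 0)
    (hθ1 : ‖θ‖ = 1) : Polynomial.aeval θ⁻¹ f = 0 := by
  have h1 : Polynomial.aeval ((starRingEnd ℂ) θ) f = 0 := by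
    have h2 := Polynomial.hom_eval₂ f (algebraMap ℤ ℂ) (starRingEnd ℂ) θ
    rw [Polynomial.aeval_def] at hroot ⊢
    rw [show (starRingEnd ℂ).comp (algebraMap ℤ ℂ) = algebraMap ℤ ℂ from Subsingleton.elim _ _] at h2
    rw [← h2, hroot, map_zero]
  have hinv : (starRingEnd ℂ) θ = θ⁻¹ := by
    have hmul : θ * (starRingEnd ℂ) θ = 1 := by
      rw [Complex.mul_conj]
      rw [Complex.normSq_eq_norm_sq, hθ1]
      norm_num
    exact eq_inv_of_mul_eq_one_left (by rw [mul_comm] at hmul; exact hmul)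
  rw [← hinv]
  exact h1

/-- strip bound -/
lemma phi_strip {W : ℤ → ℂ} {B : ℝ} (hW : ∀ l, ‖W l‖ ≤ B) (d : ℕ) (m : ℤ) (j : ℕ) (hj : j ≤ d) :
    ‖phi W (m + j) - phi W m‖ ≤ d * B := by
  have hB0 : 0 ≤ B := le_trans (norm_nonneg _) (hW 0)
  have h1 := sum_Icc_eq_phi W m (m + j - 1) (by omega)
  rw [show m + (j:ℤ) - 1 + 1 = m + j by ring] at h1
  rw [← h1]
  calc ‖∑ k ∈ Icc m (m + (j:ℤ) - 1), W k‖ ≤ ∑ k ∈ Icc m (m + (j:ℤ) - 1), ‖W k‖ :=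
        norm_sum_le _ _
    _ ≤ ∑ k ∈ Icc m (m + (j:ℤ) - 1), B := Finset.sum_le_sum (fun k _ => hW k)
    _ = ((Icc m (m + (j:ℤ) - 1)).card : ℝ) * B := by rw [Finset.sum_const, nsmul_eq_mul]
    _ ≤ d * B := by
        refine mul_le_mul_of_nonneg_right ?_ hB0
        rw [Int.card_Icc]
        have : (m + (j:ℤ) - 1 + 1 - m).toNat = j := by omega
        rw [this]
        exact_mod_cast hj

lemma forward_bound (f : Polynomial ℤ) (w : ℤ → ℝ) (B : ℝ) (hB : ∀ n, |w n| ≤ B)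
    (v : ℤ → ℤ) (hw : ∀ n, fsR f w n = (v n : ℝ)) {θ : ℂ} (hθ1 : ‖θ‖ = 1)
    (hzero : ∑ j ∈ range (f.natDegree+1), (f.coeff j : ℂ) * θ⁻¹ ^ j = 0) :
    ∃ C : ℝ, 0 ≤ C ∧ ∀ a b : ℤ, ‖∑ k ∈ Icc a b, (v k : ℂ) * θ ^ k‖ ≤ C := by
  have hθ0 : θ ≠ 0 := ne_zero_of_abs_one hθ1
  have hB0 : 0 ≤ B := le_trans (abs_nonneg _) (hB 0)
  set d := f.natDegree with hd
  set W : ℤ → ℂ := fun l => (w l : ℂ) * θ ^ l with hW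
  have hWnorm : ∀ l, ‖W l‖ ≤ B := by
    intro l
    rw [hW]
    simp only
    rw [norm_mul, norm_zpow_one hθ1, mul_one, Complex.norm_real, Real.norm_eq_abs]
    exact hB l
  set c : ℕ → ℂ := fun j => (f.coeff j : ℂ) * θ⁻¹ ^ j with hc
  have hnormc : ∀ j, 0 ≤ ‖c j‖ := fun j => norm_nonneg _
  refine ⟨(∑ j ∈ range (d+1), ‖c j‖) * (d * B + d * B),
    mul_nonneg (Finset.sum_nonneg fun j _ => norm_nonneg _)
      (by have : (0:ℝ) ≤ (d:ℝ) * B := by positivity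
          linarith), fun a b => ?_⟩
  rcases lt_or_ge b a with hab | hab
  · rw [Finset.Icc_eq_empty (by omega)]
    simp only [Finset.sum_empty, norm_zero]
    refine mul_nonneg (Finset.sum_nonneg fun j _ => norm_nonneg _) ?_
    have : (0:ℝ) ≤ (d:ℝ) * B := by positivity
    linarith
  have hcast : ∀ k : ℤ, (v k : ℂ) = ∑ j ∈ range (d+1), (f.coeff j : ℂ) * (w (k+j) : ℂ) := by
    intro k
    have h1 := hw k
    unfold fsR at h1
    have := congrArg (fun r : ℝ => (r : ℂ)) h1
    push_cast at this ⊢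
    rw [← this]
  have eq1 : ∑ k ∈ Icc a b, (v k : ℂ) * θ ^ k
      = ∑ j ∈ range (d+1), ∑ k ∈ Icc a b, (f.coeff j : ℂ) * (w (k+j) : ℂ) * θ ^ k := by
    rw [Finset.sum_comm]
    refine Finset.sum_congr rfl (fun k _ => ?_)
    rw [hcast k, Finset.sum_mul]
  have eq2 : ∀ j ∈ range (d+1), ∑ k ∈ Icc a b, (f.coeff j : ℂ) * (w (k+j) : ℂ) * θ ^ k
      = c j * (phi W (b+1+j) - phi W (a+j)) := by
    intro j _
    have h2 : ∀ k : ℤ, (f.coeff j : ℂ) * (w (k+j) : ℂ) * θ ^ k = c j * W (k + j) := by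
      intro k
      have hp : θ⁻¹ ^ j * θ ^ (k + (j:ℤ)) = θ ^ k := by
        rw [← zpow_natCast θ⁻¹ j, inv_zpow, ← zpow_neg, ← zpow_add₀ hθ0]
        congr 1; ring
      rw [hc, hW]
      simp only
      rw [← hp]
      ring
    rw [Finset.sum_congr rfl (fun k _ => h2 k), ← Finset.mul_sum]
    congr 1
    rw [sum_Icc_shift (fun k => W (k + j)) a b (-(j:ℤ))]
    rw [show a - -(j:ℤ) = a + j by ring, show b - -(j:ℤ) = b + j by ring]
    have h3 : ∀ i : ℤ, W (i + -(j:ℤ) + j) = W i := fun i => by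
      rw [show i + -(j:ℤ) + j = i by ring]
    rw [Finset.sum_congr rfl (fun i _ => h3 i)]
    rw [sum_Icc_eq_phi W (a + j) (b + j) (by omega)]
    rw [show b + (j:ℤ) + 1 = b + 1 + j by ring]
  rw [eq1, Finset.sum_congr rfl eq2]
  -- subtract the zero linear combination
  have hsub : ∑ j ∈ range (d+1), c j * (phi W (b+1+j) - phi W (a+j))
      = ∑ j ∈ range (d+1), c j * ((phi W (b+1+j) - phi W (b+1)) - (phi W (a+j) - phi W a)) := by
    have h4 : ∑ j ∈ range (d+1), c j * (phi W (b+1+j) - phi W (a+j))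
        - ∑ j ∈ range (d+1), c j * ((phi W (b+1+j) - phi W (b+1)) - (phi W (a+j) - phi W a))
        = (∑ j ∈ range (d+1), c j) * (phi W (b+1) - phi W a) := by
      rw [← Finset.sum_sub_distrib, Finset.sum_mul]
      refine Finset.sum_congr rfl (fun j _ => ?_)
      ring
    rw [hzero, zero_mul] at h4
    exact sub_eq_zero.mp h4
  rw [hsub]
  calc ‖∑ j ∈ range (d+1), c j * ((phi W (b+1+j) - phi W (b+1)) - (phi W (a+j) - phi W a))‖
      ≤ ∑ j ∈ range (d+1), ‖c j * ((phi W (b+1+j) - phi W (b+1)) - (phi W (a+j) - phi W a))‖ :=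
        norm_sum_le _ _
    _ ≤ ∑ j ∈ range (d+1), ‖c j‖ * (d * B + d * B) := by
        refine Finset.sum_le_sum (fun j hj => ?_)
        rw [norm_mul]
        refine mul_le_mul_of_nonneg_left ?_ (norm_nonneg _)
        refine (norm_sub_le _ _).trans ?_
        have hjd : j ≤ d := by
          rw [Finset.mem_range] at hj; omega
        exact add_le_add (phi_strip hWnorm d (b+1) j hjd) (phi_strip hWnorm d a j hjd)
    _ = (∑ j ∈ range (d+1), ‖c j‖) * (d * B + d * B) := by rw [← Finset.sum_mul]

/-- from bounds on `[-m, n]` sums to bounds on all `[a,b]` sums -/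
lemma bridge {g : ℤ → ℂ} {C : ℝ}
    (h : ∀ m n : ℕ, ‖∑ k ∈ Icc (-(m:ℤ)) (n:ℤ), g k‖ ≤ C) :
    ∃ C' : ℝ, 0 ≤ C' ∧ ∀ a b : ℤ, ‖∑ k ∈ Icc a b, g k‖ ≤ C' := by
  have hC0 : 0 ≤ C := le_trans (norm_nonneg _) (h 0 0)
  have hphi : ∀ n : ℤ, ‖phi g n‖ ≤ C + ‖g 0‖ := by
    intro n
    unfold phi
    split
    · rcases eq_or_lt_of_le (show (0:ℤ) ≤ n by assumption) with h1 | h1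
      · rw [← h1]
        rw [Finset.Icc_eq_empty (by omega)]
        simp only [Finset.sum_empty, norm_zero]
        positivity
      · have h2 := h 0 (n-1).toNat
        rw [show (-(0:ℕ) : ℤ) = 0 by norm_num, show (((n-1).toNat:ℕ) : ℤ) = n - 1 by omega] at h2
        calc ‖∑ k ∈ Icc (0:ℤ) (n-1), g k‖ ≤ C := h2
          _ ≤ C + ‖g 0‖ := by
              have : (0:ℝ) ≤ ‖g 0‖ := norm_nonneg _
              linarith
    · rw [norm_neg]
      have h2 := h (-n).toNat 0
      rw [show (-((-n).toNat:ℕ) : ℤ) = n by omega, show (((0:ℕ)):ℤ) = 0 by norm_num] at h2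
      have h3 : ∑ k ∈ Icc n (0:ℤ), g k = (∑ k ∈ Icc n (-1:ℤ), g k) + g 0 := by
        have := Icc_succ_top' (a := n) (b := (-1:ℤ)) (by omega) g
        simpa using this
      have h4 : ∑ k ∈ Icc n (-1:ℤ), g k = (∑ k ∈ Icc n (0:ℤ), g k) - g 0 := by
        rw [h3]; ring
      rw [h4]
      calc ‖(∑ k ∈ Icc n (0:ℤ), g k) - g 0‖ ≤ ‖∑ k ∈ Icc n (0:ℤ), g k‖ + ‖g 0‖ := norm_sub_le _ _
        _ ≤ C + ‖g 0‖ := add_le_add h2 le_rfl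
  refine ⟨2 * (C + ‖g 0‖), by positivity, fun a b => ?_⟩
  rcases lt_or_ge b a with hab | hab
  · rw [Finset.Icc_eq_empty (by omega)]
    simp only [Finset.sum_empty, norm_zero]
    positivity
  · rw [sum_Icc_eq_phi g a b (by omega)]
    calc ‖phi g (b+1) - phi g a‖ ≤ ‖phi g (b+1)‖ + ‖phi g a‖ := norm_sub_le _ _
      _ ≤ 2 * (C + ‖g 0‖) := by
          have := hphi (b+1); have := hphi a; linarith

lemma periodic_norm_bound (g : ℤ → ℂ) (p : ℕ) (hp : 0 < p)
    (hper : ∀ n : ℤ, g (n + p) = g n) :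
    ∃ C : ℝ, 0 ≤ C ∧ ∀ n : ℤ, ‖g n‖ ≤ C := by
  have hshift : ∀ (q : ℤ) (m : ℤ), g (m + p * q) = g m := by
    intro q
    induction q using Int.induction_on with
    | zero => intro m; simp
    | succ k ih =>
        intro m
        have : m + (p:ℤ) * ((k:ℤ)+1) = (m + p * k) + p := by ring
        rw [this, hper, ih]
    | pred k ih =>
        intro m
        have h1 : m + (p:ℤ) * (-(k:ℤ)-1) = (m + p * (-(k:ℤ))) - p := by ring
        have h2 := hper ((m + (p:ℤ) * (-(k:ℤ))) - p)
        rw [show (m + (p:ℤ) * (-(k:ℤ))) - p + p = m + p * (-(k:ℤ)) by ring] at h2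
        rw [h1, ← h2]
        exact ih m
  refine ⟨∑ k ∈ Icc (0:ℤ) ((p:ℤ)-1), ‖g k‖, Finset.sum_nonneg (fun k _ => norm_nonneg _),
    fun n => ?_⟩
  have hmod : g n = g (n % p) := by
    have h1 := hshift (n / p) (n % p)
    rw [show n % (p:ℤ) + (p:ℤ) * (n / p) = n by rw [add_comm]; exact Int.mul_ediv_add_emod n p] at h1
    exact h1
  rw [hmod]
  refine Finset.single_le_sum (fun k _ => norm_nonneg (g k)) ?_
  rw [Finset.mem_Icc]
  constructor
  · exact Int.emod_nonneg n (by exact_mod_cast hp.ne')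
  · have := Int.emod_lt_of_pos n (show (0:ℤ) < p by exact_mod_cast hp)
    omega

lemma periodic_partial_bound {θ : ℂ} (hθ1 : ‖θ‖ = 1) {p : ℕ} (hp : 0 < p)
    (hθp : θ ^ (p:ℕ) ≠ 1) (v : ℤ → ℤ) (B : ℝ) (hB : ∀ n, |(v n : ℝ)| ≤ B)
    (hper : ∀ n : ℤ, v (n + (p:ℤ)) = v n) :
    ∃ C : ℝ, 0 ≤ C ∧ ∀ a b : ℤ, ‖∑ k ∈ Icc a b, (v k : ℂ) * θ ^ k‖ ≤ C := by
  have hθ0 : θ ≠ 0 := ne_zero_of_abs_one hθ1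
  have hB0 : 0 ≤ B := le_trans (abs_nonneg _) (hB 0)
  set g : ℤ → ℂ := fun k => (v k : ℂ) * θ ^ k with hg
  set D : ℤ → ℂ := fun n => ∑ j ∈ Icc (0:ℤ) ((p:ℤ)-1), (v (n+j) : ℂ) * θ ^ j with hD
  have hDbd : ∀ n, ‖D n‖ ≤ p * B := by
    intro n
    calc ‖D n‖ ≤ ∑ j ∈ Icc (0:ℤ) ((p:ℤ)-1), ‖(v (n+j) : ℂ) * θ ^ j‖ := norm_sum_le _ _
      _ ≤ ∑ j ∈ Icc (0:ℤ) ((p:ℤ)-1), B := by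
          refine Finset.sum_le_sum (fun j _ => ?_)
          rw [norm_mul, norm_zpow_one hθ1, mul_one]
          have hcast : ((v (n+j) : ℤ) : ℂ) = (((v (n+j) : ℤ) : ℝ) : ℂ) := by push_cast; ring
          rw [hcast, Complex.norm_real, Real.norm_eq_abs]
          exact hB _
      _ = ((Icc (0:ℤ) ((p:ℤ)-1)).card : ℝ) * B := by rw [Finset.sum_const, nsmul_eq_mul]
      _ = p * B := by
          rw [Int.card_Icc, show ((p:ℤ)-1+1-0).toNat = p by omega]
  have hθpz : θ ^ ((p:ℕ):ℤ) - 1 ≠ 0 := by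
    rw [zpow_natCast]
    exact sub_ne_zero.mpr hθp
  set E : ℤ → ℂ := fun n => θ ^ n * D n * (θ ^ ((p:ℕ):ℤ) - 1)⁻¹ with hE
  have hDper : ∀ n, D (n + p) = D n := by
    intro n
    rw [hD]
    refine Finset.sum_congr rfl (fun j _ => ?_)
    rw [show n + (p:ℤ) + j = (n + j) + p by ring, hper]
  have hPhiD : ∀ n : ℤ, phi g (n + p) - phi g n = θ ^ n * D n := by
    intro n
    have h1 := sum_Icc_eq_phi g n (n + p - 1) (by omega)
    rw [show n + (p:ℤ) - 1 + 1 = n + p by ring] at h1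
    rw [← h1]
    rw [sum_Icc_shift g n (n + p - 1) n]
    rw [show n - n = (0:ℤ) by ring, show n + (p:ℤ) - 1 - n = (p:ℤ) - 1 by ring]
    rw [hD, Finset.mul_sum]
    refine Finset.sum_congr rfl (fun i _ => ?_)
    rw [hg]
    simp only
    rw [show i + n = n + i by ring, zpow_add₀ hθ0]
    ring
  have hEdiff : ∀ n : ℤ, E (n + p) - E n = θ ^ n * D n := by
    intro n
    rw [hE]
    simp only
    rw [hDper, zpow_add₀ hθ0]
    linear_combination (θ ^ n * D n) * (mul_inv_cancel₀ hθpz)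
  set Psi : ℤ → ℂ := fun n => phi g n - E n with hPsi
  have hPsiper : ∀ n : ℤ, Psi (n + p) = Psi n := by
    intro n
    rw [hPsi]
    simp only
    have := hPhiD n
    have := hEdiff n
    have hsub : (phi g (n+p) - E (n+p)) - (phi g n - E n)
        = (phi g (n+p) - phi g n) - (E (n+p) - E n) := by ring
    have : (phi g (n+p) - E (n+p)) - (phi g n - E n) = 0 := by
      rw [hsub, hPhiD n, hEdiff n]; ring
    linear_combination this
  obtain ⟨CP, hCP0, hCP⟩ := periodic_norm_bound Psi p hp hPsiper
  have hphibd : ∀ n, ‖phi g n‖ ≤ CP + (p * B) * ‖(θ ^ ((p:ℕ):ℤ) - 1)⁻¹‖ := by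
    intro n
    have h1 : phi g n = Psi n + E n := by rw [hPsi]; ring
    rw [h1]
    calc ‖Psi n + E n‖ ≤ ‖Psi n‖ + ‖E n‖ := norm_add_le _ _
      _ ≤ CP + (p * B) * ‖(θ ^ ((p:ℕ):ℤ) - 1)⁻¹‖ := by
          refine add_le_add (hCP n) ?_
          rw [hE]
          simp only
          rw [norm_mul, norm_mul, norm_zpow_one hθ1, one_mul]
          exact mul_le_mul_of_nonneg_right (hDbd n) (norm_nonneg _)
  refine ⟨2 * (CP + (p * B) * ‖(θ ^ ((p:ℕ):ℤ) - 1)⁻¹‖), by positivity, fun a b => ?_⟩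
  rcases lt_or_ge b a with hab | hab
  · rw [Finset.Icc_eq_empty (by omega)]
    simp only [Finset.sum_empty, norm_zero]
    positivity
  · rw [show (∑ k ∈ Icc a b, (v k : ℂ) * θ ^ k) = ∑ k ∈ Icc a b, g k from rfl]
    rw [sum_Icc_eq_phi g a b (by omega)]
    calc ‖phi g (b+1) - phi g a‖ ≤ ‖phi g (b+1)‖ + ‖phi g a‖ := norm_sub_le _ _
      _ ≤ 2 * (CP + (p * B) * ‖(θ ^ ((p:ℕ):ℤ) - 1)⁻¹‖) := by
          have := hphibd (b+1); have := hphibd a; linarith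


/- ### Core constructions -/

lemma core_mpr (f : Polynomial ℤ) (hm : 1 ≤ f.natDegree) (h0 : f.coeff 0 ≠ 0)
    (hirr : Irreducible (Polynomial.toLaurent f)) (v : ℤ → ℤ) (hbd : BddZ v)
    (H : ∀ θ : ℂ, Polynomial.aeval θ f = 0 → ‖θ‖ = 1 →
      ∃ C : ℝ, 0 ≤ C ∧ ∀ a b : ℤ, ‖∑ k ∈ Icc a b, (v k : ℂ) * θ ^ k‖ ≤ C) :
    InVf f v := by
  obtain ⟨B, hBv⟩ := hbd
  have hBR : ∀ n : ℤ, ‖((v n : ℤ) : ℂ)‖ ≤ (B : ℝ) := by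
    intro n
    have h1 : ((v n : ℤ) : ℂ) = (((v n : ℤ) : ℝ) : ℂ) := by push_cast; ring
    rw [h1, Complex.norm_real, Real.norm_eq_abs]
    have := hBv n
    have : |((v n : ℤ) : ℝ)| ≤ (B : ℝ) := by exact_mod_cast this
    exact this
  have hB0 : (0:ℝ) ≤ (B : ℝ) := le_trans (norm_nonneg _) (hBR 0)
  set F : Polynomial ℂ := f.map (Int.castRingHom ℂ) with hF
  have hf0 : f ≠ 0 := fun h => h0 (by simp [h])
  have hF0 : F ≠ 0 := by
    rw [hF, Polynomial.map_ne_zero_iff Int.cast_injective]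
    exact hf0
  have hdeg : F.natDegree = f.natDegree :=
    Polynomial.natDegree_map_eq_of_injective Int.cast_injective f
  set c : ℂ := F.leadingCoeff with hcdef
  have hc0 : c ≠ 0 := Polynomial.leadingCoeff_ne_zero.mpr hF0
  set l : List ℂ := F.roots.toList with hl
  have hlcoe : (l : Multiset ℂ) = F.roots := Multiset.coe_toList _
  have hlnd : l.Nodup := by
    rw [← Multiset.coe_nodup, hlcoe]
    exact f_roots_nodup f hm h0 hirr
  have hFfact : F = C c * (l.map (fun θ => X - C θ)).prod := by
    have hs := (IsAlgClosed.splits F).eq_prod_roots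
    rw [hs, ← hlcoe, Multiset.map_coe, Multiset.prod_coe]
  have hroots_aeval : ∀ θ ∈ l, Polynomial.aeval θ f = 0 := by
    intro θ hθl
    have hθr : θ ∈ F.roots := by rw [← hlcoe]; exact_mod_cast hθl
    have hev : Polynomial.eval θ F = 0 := (Polynomial.mem_roots'.mp hθr).2
    rw [Polynomial.aeval_def, Polynomial.eval₂_eq_eval_map, algebraMap_int_eq]
    exact hev
  set v' : ℤ → ℂ := fun n => c⁻¹ * (v n : ℂ) with hv'
  have hbv' : BddC v' := by
    refine ⟨‖c⁻¹‖ * B, by positivity, fun n => ?_⟩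
    rw [hv']
    simp only
    rw [norm_mul]
    exact mul_le_mul_of_nonneg_left (hBR n) (norm_nonneg _)
  have hps' : ∀ θ ∈ l, ‖θ‖ = 1 → PS θ⁻¹ v' := by
    intro θ hθl hθ1
    have hrootinv := conj_root f (hroots_aeval θ hθl) hθ1
    obtain ⟨C, hC0, hC⟩ := H θ⁻¹ hrootinv (by rw [norm_inv, hθ1]; norm_num)
    refine ⟨‖c⁻¹‖ * C, by positivity, fun a b => ?_⟩
    have heq : ∑ k ∈ Icc a b, v' k * (θ⁻¹) ^ k
        = c⁻¹ * ∑ k ∈ Icc a b, (v k : ℂ) * (θ⁻¹) ^ k := by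
      rw [Finset.mul_sum]
      refine Finset.sum_congr rfl (fun k _ => ?_)
      rw [hv']
      ring
    rw [heq, norm_mul]
    exact mul_le_mul_of_nonneg_left (hC a b) (norm_nonneg _)
  obtain ⟨w', hw'b, hw'eq⟩ := solve l hlnd v' hbv' hps'
  have hP : Polynomial.aeval sigC ((l.map (fun θ => X - C θ)).prod)
      = (l.map (fun θ => Polynomial.aeval sigC (X - C θ))).prod := by
    rw [map_list_prod, List.map_map]
    rfl
  have hop : (Polynomial.aeval sigC F) w' = fun n => ((v n : ℤ) : ℂ) := by
    rw [hFfact, map_mul, Polynomial.aeval_C, Module.End.mul_apply, hP, hw'eq]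
    funext n
    rw [Module.algebraMap_end_apply]
    rw [Pi.smul_apply, smul_eq_mul, hv']
    simp only
    rw [← mul_assoc, mul_inv_cancel₀ hc0, one_mul]
  refine ⟨fun n => (w' n).re, ?_, ?_⟩
  · obtain ⟨B', hB'0, hB'⟩ := hw'b
    refine ⟨B', fun n => ?_⟩
    calc |(w' n).re| ≤ ‖w' n‖ := Complex.abs_re_le_norm _
      _ ≤ B' := by exact hB' n
  · intro n
    have h1 := aeval_sigC_apply F w' n
    rw [hop] at h1
    simp only at h1
    have h2 : ((v n : ℤ) : ℂ) = ∑ j ∈ range (f.natDegree + 1), (f.coeff j : ℂ) * w' (n + j) := by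
      rw [← hdeg]
      rw [h1]
      refine Finset.sum_congr rfl (fun j _ => ?_)
      rw [hF, Polynomial.coeff_map]
      norm_num
    have h3 : fsR f (fun n => (w' n).re) n
        = (∑ j ∈ range (f.natDegree+1), (f.coeff j : ℂ) * w' (n+j)).re := by
      unfold fsR
      rw [Complex.re_sum]
      refine Finset.sum_congr rfl (fun j _ => ?_)
      rw [Complex.mul_re]
      simp
    rw [h3, ← h2]
    simp

lemma core_mp (f : Polynomial ℤ) (v : ℤ → ℤ) (hv : InVf f v) {θ : ℂ}
    (hroot : Polynomial.aeval θ f = 0) (hθ1 : ‖θ‖ = 1) :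
    ∃ C : ℝ, 0 ≤ C ∧ ∀ a b : ℤ, ‖∑ k ∈ Icc a b, (v k : ℂ) * θ ^ k‖ ≤ C := by
  obtain ⟨w, ⟨B, hB⟩, hfs⟩ := hv
  have hzero : ∑ j ∈ range (f.natDegree+1), (f.coeff j : ℂ) * θ⁻¹ ^ j = 0 := by
    have hrootinv := conj_root f hroot hθ1
    rw [Polynomial.aeval_eq_sum_range] at hrootinv
    rw [← hrootinv]
    refine Finset.sum_congr rfl (fun j _ => ?_)
    rw [zsmul_eq_mul]
  exact forward_bound f w B hB v hfs hθ1 hzero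

/-- `v ∈ ℓ^∞(ℤ,ℤ)` lies in `V_f` iff all partial sums
`∑_{k=-m}^{n} v_k θ^k` are uniformly bounded, for each root `θ` of `f` with `|θ| = 1`.
In particular `V_f ⊇ ℓ^1(ℤ,ℤ)` and `V_f` contains every periodic bounded integer
sequence. -/
theorem Vf_bounded_partial_sums (f : Polynomial ℤ) (hm : 1 ≤ f.natDegree)
    (hlead : 0 < f.leadingCoeff) (h0 : f.coeff 0 ≠ 0)
    (hirr : Irreducible (Polynomial.toLaurent f)) (hnc : Noncyclotomic f) :
    (∀ v : ℤ → ℤ, BddZ v →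
      (InVf f v ↔ ∀ θ : ℂ, Polynomial.aeval θ f = 0 → ‖θ‖ = 1 →
        ∃ C : ℝ, ∀ m n : ℕ,
          ‖∑ k ∈ Finset.Icc (-(m : ℤ)) (n : ℤ), (v k : ℂ) * θ ^ k‖ ≤ C)) ∧
    (∀ v : ℤ → ℤ, (Summable fun n : ℤ => |(v n : ℝ)|) → InVf f v) ∧
    (∀ v : ℤ → ℤ, BddZ v → (∃ p : ℕ, 0 < p ∧ ∀ n : ℤ, v (n + (p : ℤ)) = v n) →
      InVf f v) := by
  refine ⟨?_, ?_, ?_⟩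
  · intro v hbd
    constructor
    · intro hv θ hroot habs
      obtain ⟨C, _, hC⟩ := core_mp f v hv hroot habs
      exact ⟨C, fun m n => by exact hC _ _⟩
    · intro H
      refine core_mpr f hm h0 hirr v hbd (fun θ hroot habs => ?_)
      obtain ⟨C, hC⟩ := H θ hroot habs
      exact bridge (g := fun k => (v k : ℂ) * θ ^ k) (C := C)
        (fun m n => by exact hC m n)
  · intro v hsum
    have hbd : BddZ v := by
      refine ⟨⌈∑' n : ℤ, |(v n : ℝ)|⌉, fun n => ?_⟩
      have h1 : |(v n : ℝ)| ≤ ∑' n : ℤ, |(v n : ℝ)| :=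
        Summable.le_tsum hsum n (fun j _ => abs_nonneg _)
      have h2 : (∑' n : ℤ, |(v n : ℝ)|) ≤ (⌈∑' n : ℤ, |(v n : ℝ)|⌉ : ℝ) := Int.le_ceil _
      have h3 : |((v n : ℤ) : ℝ)| = ((|v n| : ℤ) : ℝ) := by push_cast; ring
      rw [h3] at h1
      exact_mod_cast le_trans h1 h2
    refine core_mpr f hm h0 hirr v hbd (fun θ hroot habs => ?_)
    refine ⟨∑' n : ℤ, |(v n : ℝ)|, tsum_nonneg (fun n => abs_nonneg _), fun a b => ?_⟩
    calc ‖∑ k ∈ Icc a b, (v k : ℂ) * θ ^ k‖ ≤ ∑ k ∈ Icc a b, ‖(v k : ℂ) * θ ^ k‖ :=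
          norm_sum_le _ _
      _ ≤ ∑' n : ℤ, |(v n : ℝ)| := by
          have heq : ∀ k : ℤ, ‖(v k : ℂ) * θ ^ k‖ = |(v k : ℝ)| := by
            intro k
            rw [norm_mul, norm_zpow_one habs, mul_one]
            have h1 : ((v k : ℤ) : ℂ) = (((v k : ℤ) : ℝ) : ℂ) := by push_cast; ring
            rw [h1, Complex.norm_real, Real.norm_eq_abs]
          rw [Finset.sum_congr rfl (fun k _ => heq k)]
          exact Summable.sum_le_tsum _ (fun i _ => abs_nonneg _) hsum
  · rintro v hbd ⟨p, hp, hper⟩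
    refine core_mpr f hm h0 hirr v hbd (fun θ hroot habs => ?_)
    have hθp : θ ^ p ≠ 1 := hnc θ hroot p hp
    obtain ⟨B, hBv⟩ := hbd
    have hBR : ∀ n : ℤ, |((v n : ℤ) : ℝ)| ≤ (B : ℝ) := by
      intro n
      have := hBv n
      exact_mod_cast this
    exact periodic_partial_bound habs hp hθp v B hBR hper

end
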